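/- Let p be a prime and let H(z) = ∑_{m≥0} a_m z^m ∈ ℤ_p⟨z⟩ be non-constant, and let L ≥ 1 be an index such that |a_L|_p > |a_j|_p for all j > L. Then there exists a constant c₂ > 0 such that for every t ∈ ℤ_p the following holds: if n₁, …, n_{L+1} are distinct natural numbers with |H(n_i) − t|_p ≤ p^{−n_i} for each i, then there exist indices k₁ ≠ k₂ such that |n_{k₁} − n_{k₂}|_p < c₂·p^{−min(n_{k₁}, n_{k₂})/L}. -/

import Mathlib

open Filter Polynomial Finset
set_option maxHeartbeats 1000000

/-- A sequence of coefficients in `ℤ_p` is strictly convergent if `|a_m|_p → 0`;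
such a sequence is the coefficient sequence of an element of the Tate algebra `ℤ_p⟨z⟩`. -/
def StrictlyConvergent {p : ℕ} [Fact p.Prime] (a : ℕ → ℤ_[p]) : Prop :=
  Tendsto (fun m => ‖a m‖) atTop (nhds 0)

/-- Evaluation of a strictly convergent power series (given by its coefficients) at a point
of `ℤ_p`. -/
noncomputable def scEval {p : ℕ} [Fact p.Prime] (a : ℕ → ℤ_[p]) (x : ℤ_[p]) : ℤ_[p] :=
  ∑' m : ℕ, a m * x ^ m

lemma aux_summable {G : Type*} [NormedAddCommGroup G] [CompleteSpace G]
    [IsUltrametricDist G] {f : ℕ → G} {g : ℕ → ℝ} (hb : ∀ m, ‖f m‖ ≤ g m)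
    (hg : Tendsto g atTop (nhds 0)) : Summable f := by
  apply NonarchimedeanAddGroup.summable_of_tendsto_cofinite_zero
  rw [Nat.cofinite_eq_atTop]
  exact squeeze_zero_norm hb hg

lemma aux_norm_tsum_le {G : Type*} [NormedAddCommGroup G] [CompleteSpace G]
    [IsUltrametricDist G] {f : ℕ → G} {C : ℝ} (hC : 0 ≤ C) (h : ∀ m, ‖f m‖ ≤ C) :
    ‖∑' m, f m‖ ≤ C := by
  by_cases hs : Summable f
  · refine le_of_tendsto ((continuous_norm.tendsto _).comp hs.hasSum)
      (Filter.Eventually.of_forall fun s => ?_)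
    exact IsUltrametricDist.norm_sum_le_of_forall_le_of_nonneg hC fun i _ => h i
  · rw [tsum_eq_zero_of_not_summable hs]; simpa

lemma aux_norm_lt_imp {p : ℕ} [hp : Fact p.Prime] {x y : ℤ_[p]} (h : ‖x‖ < ‖y‖) :
    ‖x‖ ≤ ‖y‖ * (p : ℝ)⁻¹ := by
  have hp1 : (1 : ℝ) < p := by exact_mod_cast hp.out.one_lt
  have hy : y ≠ 0 := by
    rintro rfl
    simp only [norm_zero] at h
    exact absurd h (not_lt.mpr (norm_nonneg _))
  by_cases hx : x = 0
  · have : (0:ℝ) < ‖y‖ * (p:ℝ)⁻¹ := by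
      have := norm_pos_iff.mpr hy
      positivity
    simpa [hx] using this.le
  rw [PadicInt.norm_eq_zpow_neg_valuation hx, PadicInt.norm_eq_zpow_neg_valuation hy] at *
  have hlt : -(x.valuation : ℤ) < -(y.valuation : ℤ) := by
    exact lt_of_not_ge fun hle => absurd ((zpow_le_zpow_right₀ hp1.le hle)) (not_le.mpr h)
  have hle : -(x.valuation : ℤ) ≤ -(y.valuation : ℤ) - 1 := by omega
  calc (p:ℝ) ^ (-(x.valuation : ℤ)) ≤ (p:ℝ) ^ (-(y.valuation : ℤ) - 1) := zpow_le_zpow_right₀ hp1.le hle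
    _ = (p:ℝ) ^ (-(y.valuation : ℤ)) * (p:ℝ)⁻¹ := by
        rw [zpow_sub₀ (by positivity), zpow_one]; ring

noncomputable def auxSigma (p : ℕ) [Fact p.Prime] (L : ℕ) (n : Fin (L + 1) → ℕ) (m : ℕ) : ℤ_[p] :=
  (Polynomial.X ^ m %ₘ Lagrange.nodal Finset.univ (fun i => ((n i : ℕ) : ℤ_[p]))).coeff L

lemma auxSigma_of_le {p : ℕ} [Fact p.Prime] {L : ℕ} (n : Fin (L + 1) → ℕ) {m : ℕ} (hm : m ≤ L) :
    auxSigma p L n m = if L = m then 1 else 0 := by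
  unfold auxSigma
  rw [(Polynomial.modByMonic_eq_self_iff Lagrange.nodal_monic).mpr, Polynomial.coeff_X_pow]
  rw [Polynomial.degree_X_pow, Lagrange.degree_nodal]
  simp only [card_univ, Fintype.card_fin]
  exact_mod_cast Nat.lt_succ_of_le hm

lemma auxSigma_eq_sum {p : ℕ} [Fact p.Prime] {L : ℕ} {n : Fin (L + 1) → ℕ}
    (hinj : Function.Injective n) (m : ℕ) :
    ((auxSigma p L n m : ℤ_[p]) : ℚ_[p]) =
      ∑ i : Fin (L + 1), ((n i : ℚ_[p]) ^ m) *
        Lagrange.nodalWeight Finset.univ (fun i => ((n i : ℕ) : ℚ_[p])) i := by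
  set x : Fin (L + 1) → ℚ_[p] := fun i => ((n i : ℕ) : ℚ_[p]) with hx
  have hinjx : Set.InjOn x ↑(Finset.univ : Finset (Fin (L+1))) := by
    intro i _ j _ hij
    exact hinj (Nat.cast_injective hij)
  set f : ℤ_[p] →+* ℚ_[p] := PadicInt.Coe.ringHom with hf
  set Nz : Polynomial ℤ_[p] := Lagrange.nodal Finset.univ (fun i => ((n i : ℕ) : ℤ_[p])) with hNz
  set N : Polynomial ℚ_[p] := Lagrange.nodal Finset.univ x with hN
  have hmap : Nz.map f = N := by
    rw [hNz, hN, Lagrange.nodal_eq, Lagrange.nodal_eq, Polynomial.map_prod]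
    refine Finset.prod_congr rfl fun i _ => ?_
    rw [Polynomial.map_sub, Polynomial.map_X, Polynomial.map_C]
    norm_cast
  have hr : (X ^ m %ₘ Nz).map f = (X ^ m : Polynomial ℚ_[p]) %ₘ N := by
    rw [Polynomial.map_modByMonic _ Lagrange.nodal_monic, hmap, Polynomial.map_pow,
      Polynomial.map_X]
  have hdeg : ((X ^ m : Polynomial ℚ_[p]) %ₘ N).degree < #(Finset.univ : Finset (Fin (L + 1))) := by
    have := Polynomial.degree_modByMonic_lt (X ^ m : Polynomial ℚ_[p])
      (Lagrange.nodal_monic (s := Finset.univ) (v := x))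
    rw [Lagrange.degree_nodal] at this
    exact this
  have heval : ∀ i ∈ (Finset.univ : Finset (Fin (L + 1))),
      ((X ^ m : Polynomial ℚ_[p]) %ₘ N).eval (x i) = (fun i => x i ^ m) i := by
    intro i _
    rw [Polynomial.modByMonic_eq_sub_mul_div _ N]
    simp [hN, Lagrange.eval_nodal_at_node (Finset.mem_univ i)]
  have hinterp := Lagrange.eq_interpolate_of_eval_eq _ hinjx hdeg heval
  have hcoeff : (Lagrange.interpolate Finset.univ x (fun i => x i ^ m)).coeff L =
      ∑ i : Fin (L + 1), (x i ^ m) * Lagrange.nodalWeight Finset.univ x i := by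
    rw [Lagrange.interpolate_apply, Polynomial.finset_sum_coeff]
    refine Finset.sum_congr rfl fun i _ => ?_
    rw [Polynomial.coeff_C_mul]
    congr 1
    have hb := Lagrange.basis_eq_prod_sub_inv_mul_nodal_div (v := x) (Finset.mem_univ i)
    rw [← Lagrange.nodal_erase_eq_nodal_div (Finset.mem_univ i)] at hb
    rw [hb, Polynomial.coeff_C_mul]
    have hmon : (Lagrange.nodal ((Finset.univ : Finset (Fin (L+1))).erase i) x).Monic :=
      Lagrange.nodal_monic
    have hnd : (Lagrange.nodal ((Finset.univ : Finset (Fin (L+1))).erase i) x).natDegree = L := by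
      rw [Lagrange.natDegree_nodal, Finset.card_erase_of_mem (Finset.mem_univ i)]
      simp
    have h1 := hmon.coeff_natDegree
    rw [hnd] at h1
    rw [h1, mul_one]
  calc ((auxSigma p L n m : ℤ_[p]) : ℚ_[p]) = ((X ^ m %ₘ Nz).map f).coeff L := by
        rw [Polynomial.coeff_map]; rfl
    _ = ((X ^ m : Polynomial ℚ_[p]) %ₘ N).coeff L := by rw [hr]
    _ = ∑ i : Fin (L + 1), (x i ^ m) * Lagrange.nodalWeight Finset.univ x i := by
        rw [hinterp, hcoeff]

/-- let `H = ∑ a_m z^m ∈ ℤ_p⟨z⟩` be non-constant and `L ≥ 1` an index with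
`|a_L|_p > |a_j|_p` for all `j > L`.  Then there is `c₂ > 0` such that for every `t ∈ ℤ_p`,
among any `L + 1` distinct natural numbers `n_i` with `|H(n_i) - t|_p ≤ p^{-n_i}` there are
two, `n_{k₁} ≠ n_{k₂}`, with `|n_{k₁} - n_{k₂}|_p < c₂ p^{-min(n_{k₁}, n_{k₂})/L}`. -/
theorem padic_proximity_of_approximate_roots
    (p : ℕ) [Fact p.Prime] (a : ℕ → ℤ_[p]) (ha : StrictlyConvergent a)
    (hnc : ∃ m : ℕ, 0 < m ∧ a m ≠ 0)
    (L : ℕ) (hL : 1 ≤ L) (hLmax : ∀ j : ℕ, L < j → ‖a j‖ < ‖a L‖) :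
    ∃ c₂ : ℝ, 0 < c₂ ∧ ∀ t : ℤ_[p], ∀ n : Fin (L + 1) → ℕ, Function.Injective n →
      (∀ i, ‖scEval a (n i : ℤ_[p]) - t‖ ≤ (p : ℝ) ^ (-(n i : ℤ))) →
      ∃ k₁ k₂ : Fin (L + 1), k₁ ≠ k₂ ∧
        ‖((n k₁ : ℤ_[p]) - (n k₂ : ℤ_[p]))‖ <
          c₂ * (p : ℝ) ^ (-((min (n k₁) (n k₂) : ℝ)) / (L : ℝ)) := by
  classical
  have hp1 : (1:ℝ) < p := by exact_mod_cast (Fact.out : p.Prime).one_lt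
  have hp0 : (0:ℝ) < p := lt_trans one_pos hp1
  have haL : a L ≠ 0 := by
    intro h
    have h2 := hLmax (L+1) (Nat.lt_succ_self L)
    rw [h, norm_zero] at h2
    exact absurd h2 (not_lt.mpr (norm_nonneg _))
  have haLpos : 0 < ‖a L‖ := norm_pos_iff.mpr haL
  refine ⟨‖a L‖ ^ (-(L:ℝ)⁻¹) + 1, by positivity, ?_⟩
  intro t n hinj hb
  set x : Fin (L+1) → ℚ_[p] := fun i => ((n i : ℕ) : ℚ_[p]) with hxdef
  set w : Fin (L+1) → ℚ_[p] := fun i => Lagrange.nodalWeight Finset.univ x i with hwdef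
  have hxnorm : ∀ i, ‖x i‖ ≤ 1 := by
    intro i
    have : x i = (((n i : ℕ) : ℤ_[p]) : ℚ_[p]) := by push_cast; rfl
    rw [this, PadicInt.padic_norm_e_of_padicInt]
    exact PadicInt.norm_le_one _
  have haQ : ∀ m, ‖(a m : ℚ_[p])‖ = ‖a m‖ := fun m => PadicInt.padic_norm_e_of_padicInt _
  have hσnorm : ∀ m, ‖((auxSigma p L n m : ℤ_[p]) : ℚ_[p])‖ ≤ 1 := by
    intro m
    rw [PadicInt.padic_norm_e_of_padicInt]
    exact PadicInt.norm_le_one _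
  -- summability
  have hsummZ : ∀ c : ℤ_[p], Summable (fun m => a m * c ^ m) := by
    intro c
    refine aux_summable (fun m => ?_) ha
    rw [norm_mul]
    exact mul_le_of_le_one_right (norm_nonneg _) (PadicInt.norm_le_one _)
  have hsummQ : ∀ i, Summable (fun m => (a m : ℚ_[p]) * x i ^ m) := by
    intro i
    refine aux_summable (fun m => ?_) ha
    rw [norm_mul, haQ]
    exact mul_le_of_le_one_right (norm_nonneg _) (by
      calc ‖x i ^ m‖ = ‖x i‖ ^ m := norm_pow _ _
        _ ≤ 1 := pow_le_one₀ (norm_nonneg _) (hxnorm i))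
  have hsummσ : Summable (fun m => (a m : ℚ_[p]) * ((auxSigma p L n m : ℤ_[p]) : ℚ_[p])) := by
    refine aux_summable (fun m => ?_) ha
    rw [norm_mul, haQ]
    exact mul_le_of_le_one_right (norm_nonneg _) (hσnorm m)
  -- coercion of scEval
  have hE : ∀ i, ((scEval a ((n i : ℕ) : ℤ_[p]) : ℤ_[p]) : ℚ_[p]) =
      ∑' m, ((a m : ℚ_[p]) * x i ^ m) := by
    intro i
    have h1 := (hsummZ ((n i : ℕ) : ℤ_[p])).hasSum
    have hcont : Continuous (PadicInt.Coe.ringHom (p := p)) := continuous_subtype_val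
    have h2 := h1.map (PadicInt.Coe.ringHom (p := p)) hcont
    have h3 : (fun m => PadicInt.Coe.ringHom (a m * ((n i : ℕ) : ℤ_[p]) ^ m)) =
        fun m => (a m : ℚ_[p]) * x i ^ m := by
      funext m
      push_cast
      rfl
    rw [show (⇑(PadicInt.Coe.ringHom (p := p)) ∘ fun m => a m * ((n i : ℕ) : ℤ_[p]) ^ m) =
      fun m => PadicInt.Coe.ringHom (a m * ((n i : ℕ) : ℤ_[p]) ^ m) from rfl, h3] at h2
    rw [show ((scEval a ((n i : ℕ) : ℤ_[p]) : ℤ_[p]) : ℚ_[p]) =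
      PadicInt.Coe.ringHom (∑' m, a m * ((n i : ℕ) : ℤ_[p]) ^ m) from rfl]
    exact h2.tsum_eq.symm
  -- the key sum S
  set t' : ℚ_[p] := ((t : ℤ_[p]) : ℚ_[p]) with ht'
  set S : ℚ_[p] := ∑ i : Fin (L+1), w i * (((scEval a ((n i : ℕ) : ℤ_[p]) : ℤ_[p]) : ℚ_[p]) - t')
    with hSdef
  have hσ0 : ((auxSigma p L n 0 : ℤ_[p]) : ℚ_[p]) = 0 := by
    rw [auxSigma_of_le n (Nat.zero_le L), if_neg (by omega)]
    simp
  have hsumw : ∑ i : Fin (L+1), w i = 0 := by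
    have := auxSigma_eq_sum (p := p) hinj 0
    simp only [pow_zero, one_mul] at this
    rw [hσ0] at this
    exact this.symm
  have hS : S = ∑' m, ((a m : ℚ_[p]) * ((auxSigma p L n m : ℤ_[p]) : ℚ_[p])) := by
    rw [hSdef]
    have step1 : ∀ i : Fin (L+1),
        w i * (((scEval a ((n i : ℕ) : ℤ_[p]) : ℤ_[p]) : ℚ_[p]) - t') =
        (∑' m, w i * ((a m : ℚ_[p]) * x i ^ m)) - w i * t' := by
      intro i
      rw [mul_sub, hE i, tsum_mul_left]
    rw [Finset.sum_congr rfl (fun i _ => step1 i), Finset.sum_sub_distrib]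
    rw [← Finset.sum_mul, hsumw, zero_mul, sub_zero]
    rw [← Summable.tsum_finsetSum (fun i _ => (hsummQ i).mul_left (w i))]
    congr 1
    funext m
    rw [auxSigma_eq_sum hinj m, Finset.mul_sum]
    exact Finset.sum_congr rfl fun i _ => by ring
  -- S is close to a L
  have hbound : ‖S - (a L : ℚ_[p])‖ ≤ ‖a L‖ * (p:ℝ)⁻¹ := by
    have hfin : Summable (fun m => if m = L then (a L : ℚ_[p]) else 0) := by
      apply summable_of_ne_finset_zero (s := {L})
      intro m hm
      rw [if_neg (by simpa using hm)]
    have htsum2 : ∑' m, (if m = L then (a L : ℚ_[p]) else 0) = (a L : ℚ_[p]) := tsum_ite_eq L _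
    have hsplit : S - (a L : ℚ_[p]) =
        ∑' m, ((a m : ℚ_[p]) * ((auxSigma p L n m : ℤ_[p]) : ℚ_[p]) -
          (if m = L then (a L : ℚ_[p]) else 0)) := by
      rw [Summable.tsum_sub hsummσ hfin, htsum2, hS]
    rw [hsplit]
    refine aux_norm_tsum_le (by positivity) fun m => ?_
    rcases lt_trichotomy m L with hm | hm | hm
    · rw [auxSigma_of_le n hm.le, if_neg (by omega), if_neg (by omega)]
      simp only [PadicInt.coe_zero, mul_zero, sub_zero, norm_zero]
      positivity
    · subst hm
      rw [auxSigma_of_le n le_rfl, if_pos rfl, if_pos rfl]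
      simp only [PadicInt.coe_one, mul_one, sub_self, norm_zero]
      positivity
    · rw [if_neg (by omega), sub_zero, norm_mul, haQ]
      calc ‖a m‖ * ‖((auxSigma p L n m : ℤ_[p]) : ℚ_[p])‖
          ≤ ‖a m‖ * 1 := by
            exact mul_le_mul_of_nonneg_left (hσnorm m) (norm_nonneg _)
        _ = ‖a m‖ := mul_one _
        _ ≤ ‖a L‖ * (p:ℝ)⁻¹ := aux_norm_lt_imp (hLmax m hm)
  have hlt : ‖a L‖ * (p:ℝ)⁻¹ < ‖a L‖ := by
    have : (p:ℝ)⁻¹ < 1 := by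
      rw [inv_lt_one_iff₀]; right; exact hp1
    exact mul_lt_of_lt_one_right haLpos this
  have hSge : ‖a L‖ ≤ ‖S‖ := by
    by_contra hcon
    push_neg at hcon
    have h2 : ‖(a L : ℚ_[p])‖ ≤ max ‖S‖ ‖(a L : ℚ_[p]) - S‖ := by
      have := IsUltrametricDist.norm_add_le_max S ((a L : ℚ_[p]) - S)
      rwa [add_sub_cancel] at this
    rw [haQ] at h2
    have h3 : ‖(a L : ℚ_[p]) - S‖ < ‖a L‖ := by
      rw [norm_sub_rev]
      exact lt_of_le_of_lt hbound hlt
    have := max_lt hcon h3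
    exact absurd (lt_of_le_of_lt h2 this) (lt_irrefl _)
  -- pick the dominant term
  obtain ⟨i, _, hi⟩ := IsUltrametricDist.exists_norm_finset_sum_le_of_nonempty
    (Finset.univ_nonempty (α := Fin (L+1)))
    (fun i => w i * (((scEval a ((n i : ℕ) : ℤ_[p]) : ℤ_[p]) : ℚ_[p]) - t'))
  have hterm : ‖((scEval a ((n i : ℕ) : ℤ_[p]) : ℤ_[p]) : ℚ_[p]) - t'‖ ≤ (p:ℝ) ^ (-(n i : ℤ)) := by
    have heq : ((scEval a ((n i : ℕ) : ℤ_[p]) : ℤ_[p]) : ℚ_[p]) - t' =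
        ((scEval a ((n i : ℕ) : ℤ_[p]) - t : ℤ_[p]) : ℚ_[p]) := by push_cast; ring
    rw [heq, PadicInt.padic_norm_e_of_padicInt]
    exact hb i
  -- norms of differences
  set D : ℝ := ∏ j ∈ (Finset.univ : Finset (Fin (L+1))).erase i, ‖x i - x j‖ with hDdef
  have hxne : ∀ j ∈ (Finset.univ : Finset (Fin (L+1))).erase i, x i ≠ x j := by
    intro j hj
    intro hceq
    exact absurd (hinj (Nat.cast_injective hceq)).symm (Finset.ne_of_mem_erase hj)
  have hDpos : 0 < D := by
    refine Finset.prod_pos fun j hj => ?_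
    rw [norm_pos_iff, sub_ne_zero]
    exact hxne j hj
  have hwnorm : ‖w i‖ = D⁻¹ := by
    rw [hwdef]
    simp only [Lagrange.nodalWeight]
    rw [norm_prod, hDdef, ← Finset.prod_inv_distrib]
    exact Finset.prod_congr rfl fun j _ => norm_inv _
  have hkey : ‖a L‖ ≤ D⁻¹ * (p:ℝ) ^ (-(n i : ℤ)) := by
    calc ‖a L‖ ≤ ‖S‖ := hSge
      _ ≤ ‖w i * (((scEval a ((n i : ℕ) : ℤ_[p]) : ℤ_[p]) : ℚ_[p]) - t')‖ := hi
      _ = ‖w i‖ * ‖((scEval a ((n i : ℕ) : ℤ_[p]) : ℤ_[p]) : ℚ_[p]) - t'‖ := norm_mul _ _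
      _ ≤ D⁻¹ * (p:ℝ) ^ (-(n i : ℤ)) := by
          rw [hwnorm]
          exact mul_le_mul_of_nonneg_left hterm (by positivity)
  have hD1 : D ≤ (p:ℝ) ^ (-(n i : ℤ)) / ‖a L‖ := by
    rw [le_div_iff₀ haLpos]
    calc D * ‖a L‖ ≤ D * (D⁻¹ * (p:ℝ) ^ (-(n i : ℤ))) :=
          mul_le_mul_of_nonneg_left hkey hDpos.le
      _ = (p:ℝ) ^ (-(n i : ℤ)) := by
          field_simp
  -- choose closest node
  have herasene : ((Finset.univ : Finset (Fin (L+1))).erase i).Nonempty := by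
    rw [← Finset.card_pos, Finset.card_erase_of_mem (Finset.mem_univ i), Finset.card_univ,
      Fintype.card_fin]
    omega
  obtain ⟨j₀, hj₀, hjmin⟩ := Finset.exists_min_image _ (fun j => ‖x i - x j‖) herasene
  set d : ℝ := ‖x i - x j₀‖ with hddef
  have hd0 : 0 ≤ d := norm_nonneg _
  have hcerase : ((Finset.univ : Finset (Fin (L+1))).erase i).card = L := by
    rw [Finset.card_erase_of_mem (Finset.mem_univ i), Finset.card_univ, Fintype.card_fin]
    omega
  have hdpow : d ^ L ≤ D := by
    calc d ^ L = ∏ _j ∈ (Finset.univ : Finset (Fin (L+1))).erase i, d := by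
          rw [Finset.prod_const, hcerase]
      _ ≤ D := Finset.prod_le_prod (fun j _ => hd0) (fun j hj => hjmin j hj)
  have hdpowB : d ^ L ≤ (p:ℝ) ^ (-(n i : ℤ)) / ‖a L‖ := hdpow.trans hD1
  -- extract the root
  have hLR : (0:ℝ) < (L:ℝ) := by exact_mod_cast Nat.lt_of_lt_of_le Nat.zero_lt_one hL
  have e1 : d = (d ^ L) ^ ((L:ℝ)⁻¹) := by
    rw [← Real.rpow_natCast d L, ← Real.rpow_mul hd0, mul_inv_cancel₀ hLR.ne', Real.rpow_one]
  have e2 : (d ^ L) ^ ((L:ℝ)⁻¹) ≤ ((p:ℝ) ^ (-(n i : ℤ)) / ‖a L‖) ^ ((L:ℝ)⁻¹) :=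
    Real.rpow_le_rpow (pow_nonneg hd0 _) hdpowB (inv_nonneg.mpr hLR.le)
  have hzp : (p:ℝ) ^ (-(n i : ℤ)) = (p:ℝ) ^ (-(n i : ℝ)) := by
    rw [← Real.rpow_intCast (p:ℝ) (-(n i : ℤ))]
    norm_num
  have e3 : ((p:ℝ) ^ (-(n i : ℤ)) / ‖a L‖) ^ ((L:ℝ)⁻¹)
      = (p:ℝ) ^ (-(n i : ℝ) * (L:ℝ)⁻¹) * ‖a L‖ ^ (-(L:ℝ)⁻¹) := by
    rw [hzp, Real.div_rpow (Real.rpow_nonneg hp0.le _) (norm_nonneg _),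
      ← Real.rpow_mul hp0.le, div_eq_mul_inv, ← Real.rpow_neg (norm_nonneg _)]
  have e5 : (p:ℝ) ^ (-(n i : ℝ) * (L:ℝ)⁻¹) ≤
      (p:ℝ) ^ (-((min (n i) (n j₀) : ℕ) : ℝ) / (L:ℝ)) := by
    apply Real.rpow_le_rpow_of_exponent_le hp1.le
    rw [div_eq_mul_inv]
    apply mul_le_mul_of_nonneg_right _ (inv_nonneg.mpr hLR.le)
    simp only [neg_le_neg_iff]
    exact_mod_cast Nat.min_le_left (n i) (n j₀)
  have hfinal : d ≤ ‖a L‖ ^ (-(L:ℝ)⁻¹) * (p:ℝ) ^ (-((min (n i) (n j₀) : ℕ) : ℝ) / (L:ℝ)) := by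
    calc d = (d ^ L) ^ ((L:ℝ)⁻¹) := e1
      _ ≤ ((p:ℝ) ^ (-(n i : ℤ)) / ‖a L‖) ^ ((L:ℝ)⁻¹) := e2
      _ = (p:ℝ) ^ (-(n i : ℝ) * (L:ℝ)⁻¹) * ‖a L‖ ^ (-(L:ℝ)⁻¹) := e3
      _ ≤ (p:ℝ) ^ (-((min (n i) (n j₀) : ℕ) : ℝ) / (L:ℝ)) * ‖a L‖ ^ (-(L:ℝ)⁻¹) :=
          mul_le_mul_of_nonneg_right e5 (Real.rpow_nonneg (norm_nonneg _) _)
      _ = ‖a L‖ ^ (-(L:ℝ)⁻¹) * (p:ℝ) ^ (-((min (n i) (n j₀) : ℕ) : ℝ) / (L:ℝ)) := mul_comm _ _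
  refine ⟨i, j₀, fun hij => absurd hij.symm (Finset.ne_of_mem_erase hj₀), ?_⟩
  have hnorm_eq : ‖((n i : ℤ_[p]) - (n j₀ : ℤ_[p]))‖ = d := by
    rw [PadicInt.norm_def]
    congr 1
  have hmin : ((min (n i) (n j₀) : ℕ) : ℝ) = min ((n i : ℕ) : ℝ) ((n j₀ : ℕ) : ℝ) := by
    push_cast
    rfl
  rw [hnorm_eq, ← hmin]

  have hPpos : (0:ℝ) < (p:ℝ) ^ (-((min (n i) (n j₀) : ℕ) : ℝ) / (L:ℝ)) :=
    Real.rpow_pos_of_pos hp0 _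
  calc d ≤ ‖a L‖ ^ (-(L:ℝ)⁻¹) * (p:ℝ) ^ (-((min (n i) (n j₀) : ℕ) : ℝ) / (L:ℝ)) := hfinal
    _ < (‖a L‖ ^ (-(L:ℝ)⁻¹) + 1) * (p:ℝ) ^ (-((min (n i) (n j₀) : ℕ) : ℝ) / (L:ℝ)) :=
        mul_lt_mul_of_pos_right (lt_add_one _) hPpos
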